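/- Suppose Ψ : ℝⁿ → ℝ is a positive twice-differentiable function satisfying the linear PDE -(1/λ)qΨ + fᵀ∇Ψ + (1/2)Tr((∇²Ψ)Σ) = 0, where λ > 0 and Σ = λ G R⁻¹ Gᵀ is a constant matrix. Then V = -λ log Ψ satisfies the stationary nonlinear HJB equation 0 = q + (∇V)ᵀf - (1/2)(∇V)ᵀ G R⁻¹ Gᵀ (∇V) + (1/2)Tr((∇²V)Σ). -/

import Mathlib

open Matrix

/-- The Hessian matrix of `f`. -/
noncomputable def hess {n : ℕ} (f : EuclideanSpace ℝ (Fin n) → ℝ)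
    (x : EuclideanSpace ℝ (Fin n)) : Matrix (Fin n) (Fin n) ℝ :=
  Matrix.of fun i j => gradient (fun y => gradient f y i) x j

section Helpers
open InnerProductSpace
variable {n : ℕ}

lemma hasGradV (lam : ℝ) (Ψ : EuclideanSpace ℝ (Fin n) → ℝ) (x : EuclideanSpace ℝ (Fin n))
    (hx : 0 < Ψ x) (hd : DifferentiableAt ℝ Ψ x) :
    HasGradientAt (fun y => -lam * Real.log (Ψ y)) ((-lam / Ψ x) • gradient Ψ x) x := by
  have hF : HasFDerivAt Ψ (toDual ℝ _ (gradient Ψ x)) x :=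
    hasGradientAt_iff_hasFDerivAt.mp hd.hasGradientAt
  have hlog : HasDerivAt Real.log (Ψ x)⁻¹ (Ψ x) := Real.hasDerivAt_log hx.ne'
  have h1 := hlog.comp_hasFDerivAt x hF
  have h2 := h1.const_mul (-lam)
  rw [hasGradientAt_iff_hasFDerivAt]
  refine h2.congr_fderiv ?_
  rw [LinearIsometryEquiv.map_smul, smul_smul, div_eq_mul_inv]

lemma gradMul {u v : EuclideanSpace ℝ (Fin n) → ℝ} {u' v' x : EuclideanSpace ℝ (Fin n)}
    (hu : HasGradientAt u u' x) (hv : HasGradientAt v v' x) :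
    HasGradientAt (fun y => u y * v y) (u x • v' + v x • u') x := by
  rw [hasGradientAt_iff_hasFDerivAt] at *
  refine (hu.mul hv).congr_fderiv ?_
  rw [map_add, LinearIsometryEquiv.map_smul, LinearIsometryEquiv.map_smul]

lemma contDiff_grad (Ψ : EuclideanSpace ℝ (Fin n) → ℝ) (hΨ : ContDiff ℝ 2 Ψ) (i : Fin n) :
    ContDiff ℝ 1 (fun y => gradient Ψ y i) := by
  have h1 : ContDiff ℝ 1 (fun y => fderiv ℝ Ψ y) := hΨ.fderiv_right (le_refl 2)
  have h2 : ContDiff ℝ 1 (fun y => (toDual ℝ (EuclideanSpace ℝ (Fin n))).symm (fderiv ℝ Ψ y)) :=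
    ((toDual ℝ (EuclideanSpace ℝ (Fin n))).symm.contDiff).comp h1
  exact (EuclideanSpace.proj i).contDiff.comp h2

lemma hasGradU (lam : ℝ) (Ψ : EuclideanSpace ℝ (Fin n) → ℝ) (x : EuclideanSpace ℝ (Fin n))
    (hx : 0 < Ψ x) (hd : DifferentiableAt ℝ Ψ x) :
    HasGradientAt (fun y => -lam / Ψ y) ((lam / (Ψ x)^2) • gradient Ψ x) x := by
  have hF : HasFDerivAt Ψ (toDual ℝ _ (gradient Ψ x)) x :=
    hasGradientAt_iff_hasFDerivAt.mp hd.hasGradientAt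
  have hinv : HasDerivAt (fun t : ℝ => -lam / t) (lam / (Ψ x)^2) (Ψ x) := by
    have := (hasDerivAt_inv hx.ne').const_mul (-lam)
    simp only [div_eq_mul_inv] at *
    refine this.congr_deriv ?_
    ring
  have h1 := hinv.comp_hasFDerivAt x hF
  rw [hasGradientAt_iff_hasFDerivAt]
  refine h1.congr_fderiv ?_
  rw [LinearIsometryEquiv.map_smul]

end Helpers

section Helpers2
open InnerProductSpace
variable {n : ℕ}

lemma hessV (lam : ℝ) (Ψ : EuclideanSpace ℝ (Fin n) → ℝ) (hΨpos : ∀ x, 0 < Ψ x)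
    (hΨ : ContDiff ℝ 2 Ψ) (x : EuclideanSpace ℝ (Fin n)) (i j : Fin n) :
    hess (fun y => -lam * Real.log (Ψ y)) x i j
      = (-lam / Ψ x) * hess Ψ x i j
        + (lam / (Ψ x)^2) * (gradient Ψ x i * gradient Ψ x j) := by
  have hdiff : ∀ y, DifferentiableAt ℝ Ψ y := fun y => (hΨ.differentiable two_ne_zero).differentiableAt
  have heq : (fun y => gradient (fun z => -lam * Real.log (Ψ z)) y i)
      = fun y => (-lam / Ψ y) * gradient Ψ y i := by
    funext y
    rw [(hasGradV lam Ψ y (hΨpos y) (hdiff y)).gradient]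
    rfl
  have hgdiff : DifferentiableAt ℝ (fun y => gradient Ψ y i) x :=
    ((contDiff_grad Ψ hΨ i).differentiable one_ne_zero).differentiableAt
  have hprod := gradMul (hasGradU lam Ψ x (hΨpos x) (hdiff x)) hgdiff.hasGradientAt
  show gradient (fun y => gradient (fun z => -lam * Real.log (Ψ z)) y i) x j = _
  rw [heq, hprod.gradient]
  show (-lam / Ψ x) * gradient (fun y => gradient Ψ y i) x j
      + gradient Ψ x i * ((lam / (Ψ x)^2) * gradient Ψ x j) = _
  show (-lam / Ψ x) * hess Ψ x i j + gradient Ψ x i * ((lam / (Ψ x)^2) * gradient Ψ x j) = _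
  ring

end Helpers2

/-- If positive `C²` `Ψ` solves the stationary linear PDE
`-(1/λ) q Ψ + fᵀ∇Ψ + (1/2)Tr((∇²Ψ)Σ) = 0` with `Σ = λ G R⁻¹ Gᵀ`, then `V = -λ log Ψ`
solves the stationary nonlinear HJB
`0 = q + (∇V)ᵀf - (1/2)(∇V)ᵀ G R⁻¹ Gᵀ (∇V) + (1/2)Tr((∇²V)Σ)`. -/
theorem stmt4 {n m : ℕ} (lam : ℝ) (hlam : 0 < lam)
    (q : EuclideanSpace ℝ (Fin n) → ℝ)
    (f : EuclideanSpace ℝ (Fin n) → Fin n → ℝ)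
    (G : Matrix (Fin n) (Fin m) ℝ) (R : Matrix (Fin m) (Fin m) ℝ) (hR : R.PosDef)
    (Ψ : EuclideanSpace ℝ (Fin n) → ℝ) (hΨpos : ∀ x, 0 < Ψ x) (hΨ : ContDiff ℝ 2 Ψ)
    (Sig : Matrix (Fin n) (Fin n) ℝ) (hSig : Sig = lam • (G * R⁻¹ * Gᵀ))
    (hpde : ∀ x, -(1 / lam) * q x * Ψ x + (f x ⬝ᵥ fun i => gradient Ψ x i)
        + (1 / 2) * Matrix.trace (hess Ψ x * Sig) = 0) :
    ∀ x, (0 : ℝ)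
      = q x + (f x ⬝ᵥ fun i => gradient (fun y => -lam * Real.log (Ψ y)) x i)
        - (1 / 2) * ((fun i => gradient (fun y => -lam * Real.log (Ψ y)) x i) ⬝ᵥ
            (G * R⁻¹ * Gᵀ).mulVec fun i => gradient (fun y => -lam * Real.log (Ψ y)) x i)
        + (1 / 2) * Matrix.trace (hess (fun y => -lam * Real.log (Ψ y)) x * Sig) := by
  intro x
  have hdiff : ∀ y, DifferentiableAt ℝ Ψ y :=
    fun y => (hΨ.differentiable two_ne_zero).differentiableAt
  have hΨne : Ψ x ≠ 0 := (hΨpos x).ne'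
  set M := G * R⁻¹ * Gᵀ with hM
  set c : ℝ := -lam / Ψ x with hc
  set d : ℝ := lam / (Ψ x)^2 with hd
  set a : Fin n → ℝ := fun i => gradient Ψ x i with haa
  have hgrad : ∀ i, gradient (fun y => -lam * Real.log (Ψ y)) x i = c * a i := by
    intro i
    rw [(hasGradV lam Ψ x (hΨpos x) (hdiff x)).gradient]
    rfl
  set A : ℝ := ∑ i, f x i * a i with hA
  set T : ℝ := ∑ i, ∑ j, hess Ψ x i j * M j i with hT
  set S : ℝ := ∑ i, ∑ j, a i * a j * M j i with hS
  have hdot1 : (f x ⬝ᵥ fun i => gradient (fun y => -lam * Real.log (Ψ y)) x i) = c * A := by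
    simp only [dotProduct, hgrad, hA, Finset.mul_sum]
    exact Finset.sum_congr rfl fun i _ => by ring
  have hdot2 : ((fun i => gradient (fun y => -lam * Real.log (Ψ y)) x i) ⬝ᵥ
      M.mulVec fun i => gradient (fun y => -lam * Real.log (Ψ y)) x i) = c^2 * S := by
    simp only [dotProduct, Matrix.mulVec, hgrad, hS, Finset.mul_sum]
    rw [Finset.sum_comm]
    exact Finset.sum_congr rfl fun i _ => Finset.sum_congr rfl fun j _ => by ring
  have htr0 : Matrix.trace (hess Ψ x * Sig) = lam * T := by
    simp only [Matrix.trace, Matrix.diag, Matrix.mul_apply, hSig, Matrix.smul_apply,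
      smul_eq_mul, hT, Finset.mul_sum]
    exact Finset.sum_congr rfl fun i _ => Finset.sum_congr rfl fun j _ => by ring
  have htr1 : Matrix.trace (hess (fun y => -lam * Real.log (Ψ y)) x * Sig)
      = c * (lam * T) + d * (lam * S) := by
    simp only [Matrix.trace, Matrix.diag, Matrix.mul_apply, hSig, Matrix.smul_apply,
      smul_eq_mul, hessV lam Ψ hΨpos hΨ x, hT, hS, Finset.mul_sum, ← Finset.sum_add_distrib]
    exact Finset.sum_congr rfl fun i _ => Finset.sum_congr rfl fun j _ => by ring
  have hpx := hpde x
  rw [htr0] at hpx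
  have hfa : (f x ⬝ᵥ fun i => gradient Ψ x i) = A := rfl
  rw [hfa] at hpx
  have hlam1 : lam * lam⁻¹ = 1 := mul_inv_cancel₀ hlam.ne'
  rw [hdot1, hdot2, htr1]
  have hcΨ : c * Ψ x = -lam := by rw [hc]; field_simp
  have hd1 : c^2 = d * lam := by rw [hc, hd]; field_simp
  linear_combination (-c) * hpx + (1/2 * S) * hd1 + (-(q x) / lam) * hcΨ + (q x) * hlam1
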